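/- Let σ : A → B be an étale morphism of K-affinoid algebras. Then there is a unique A-linear map ψ : Der_K(A) → Der_K(B) such that ψ(u) ∘ σ = σ ∘ u for each u ∈ Der_K(A); moreover ψ is a homomorphism of K-Lie algebras. -/

import Mathlib

universe u

open TrivSqZeroExt

section EtaleDerivationLift

variable {K : Type*} [CommRing K]
  {A B : Type u} [CommRing A] [Algebra K A] [CommRing B] [Algebra K B]
  [Algebra A B] [IsScalarTower K A B]

private def phiRH (u : Derivation K A A) : A →+* TrivSqZeroExt B B where
  toFun a := inl (algebraMap A B a) + inr (algebraMap A B (u a))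
  map_one' := by
    apply TrivSqZeroExt.ext <;>
      simp only [fst_add, fst_inl, fst_inr, snd_add, snd_inl, snd_inr, map_one,
        Derivation.map_one_eq_zero, map_zero, add_zero, zero_add, fst_one, snd_one]
  map_mul' x y := by
    apply TrivSqZeroExt.ext
    · simp only [fst_add, fst_inl, fst_inr, fst_mul, map_mul, add_zero]
    · simp only [snd_add, snd_inl, snd_inr, snd_mul, fst_add, fst_inl, fst_inr,
        Derivation.leibniz, map_add, map_mul, add_zero, zero_add, smul_eq_mul,
        op_smul_eq_mul, Algebra.smul_def]
      ring
  map_zero' := by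
    apply TrivSqZeroExt.ext <;>
      simp only [fst_add, fst_inl, fst_inr, snd_add, snd_inl, snd_inr, map_zero,
        add_zero, zero_add, fst_zero, snd_zero]
  map_add' x y := by
    apply TrivSqZeroExt.ext <;>
      simp only [fst_add, fst_inl, fst_inr, snd_add, snd_inl, snd_inr, map_add,
        add_zero, zero_add] <;> ring

private lemma phiRH_fst (u : Derivation K A A) (a : A) :
    (phiRH (B := B) u a).fst = algebraMap A B a := by
  simp [phiRH, fst_add, fst_inl, fst_inr]

private lemma phiRH_snd (u : Derivation K A A) (a : A) :
    (phiRH (B := B) u a).snd = algebraMap A B (u a) := by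
  simp only [phiRH, RingHom.coe_mk, MonoidHom.coe_mk, OneHom.coe_mk, snd_add, snd_inl, snd_inr, zero_add]

private def fstRH : TrivSqZeroExt B B →+* B where
  toFun := fst
  map_one' := fst_one
  map_mul' := fst_mul
  map_zero' := fst_zero (M := B)
  map_add' := fst_add

private lemma derivation_lift_exists [Algebra.FormallyEtale A B] (u : Derivation K A A) :
    ∃ D : Derivation K B B, ∀ a : A, D (algebraMap A B a) = algebraMap A B (u a) := by
  classical
  letI : Algebra A (TrivSqZeroExt B B) := (phiRH (B := B) u).toAlgebra
  have halg : ∀ a : A, algebraMap A (TrivSqZeroExt B B) a = phiRH (B := B) u a := fun _ => rfl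
  set I : Ideal (TrivSqZeroExt B B) := RingHom.ker (fstRH (B := B)) with hIdef
  have memI : ∀ x : TrivSqZeroExt B B, x ∈ I ↔ x.fst = 0 := fun x => Iff.rfl
  have hI : I ^ 2 = ⊥ := by
    rw [pow_two, eq_bot_iff]
    refine Ideal.mul_le.mpr fun x hx y hy => ?_
    rw [Ideal.mem_bot]
    apply TrivSqZeroExt.ext
    · rw [fst_mul, (memI x).mp hx, zero_mul, fst_zero]
    · rw [snd_mul, (memI x).mp hx, (memI y).mp hy, snd_zero]
      simp
  let f₀ : B →ₐ[A] (TrivSqZeroExt B B ⧸ I) :=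
  { toRingHom := (Ideal.Quotient.mk I).comp (inlHom B B)
    commutes' := fun a => by
      show Ideal.Quotient.mk I (inl (algebraMap A B a)) = _
      rw [← (Ideal.Quotient.mkₐ A I).commutes a, Ideal.Quotient.mkₐ_eq_mk, halg,
        Ideal.Quotient.eq]
      rw [memI]
      simp [phiRH_fst] }
  obtain ⟨g, hg⟩ := Algebra.FormallySmooth.comp_surjective _ _ I hI f₀
  have hfst : ∀ b : B, (g b).fst = b := by
    intro b
    have h1 : Ideal.Quotient.mk I (g b) = Ideal.Quotient.mk I (inl b) := by
      have := AlgHom.congr_fun hg b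
      simpa [f₀] using this
    have h2 : g b - inl b ∈ I := Ideal.Quotient.eq.mp h1
    have h3 : (g b).fst - b = 0 := by
      have := (memI _).mp h2
      simpa [fst_sub, fst_inl] using this
    exact sub_eq_zero.mp h3
  have hcomm : ∀ a : A, g (algebraMap A B a) = phiRH (B := B) u a := fun a => g.commutes a
  let L : B →ₗ[K] B :=
    { toFun := fun b => (g b).snd
      map_add' := fun x y => by
        show (g (x + y)).snd = (g x).snd + (g y).snd
        rw [map_add, snd_add]
      map_smul' := fun k b => by
        have hb : k • b = algebraMap A B (algebraMap K A k) * b := by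
          rw [← IsScalarTower.algebraMap_apply, Algebra.smul_def]
        show (g (k • b)).snd = k • (g b).snd
        rw [hb, map_mul, hcomm, snd_mul, phiRH_fst, phiRH_snd,
          Derivation.map_algebraMap, map_zero, ← IsScalarTower.algebraMap_apply]
        simp only [smul_zero, add_zero, smul_eq_mul]
        rw [← Algebra.smul_def] }
  refine ⟨{ toLinearMap := L
            map_one_eq_zero' := by
              show (g 1).snd = 0
              rw [map_one, snd_one]
            leibniz' := fun x y => by
              show (g (x * y)).snd = x • (g y).snd + y • (g x).snd
              rw [map_mul, snd_mul, hfst, hfst]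
              simp only [smul_eq_mul, op_smul_eq_mul]
              ring }, fun a => ?_⟩
  show (g (algebraMap A B a)).snd = algebraMap A B (u a)
  rw [hcomm, phiRH_snd]

private lemma derivation_lift_unique [Algebra.FormallyUnramified A B]
    (D D' : Derivation K B B)
    (h : ∀ a : A, D (algebraMap A B a) = D' (algebraMap A B a)) : D = D' := by
  have key : ∀ d : Derivation A B B, ∀ b : B, d b = 0 := by
    intro d b
    calc d b = d.liftKaehlerDifferential (KaehlerDifferential.D A B b) :=
          (Derivation.congr_fun d.liftKaehlerDifferential_comp b).symm
      _ = d.liftKaehlerDifferential 0 := by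
          rw [Subsingleton.elim (KaehlerDifferential.D A B b) 0]
      _ = 0 := map_zero _
  have hsub : ∀ a : A, D (algebraMap A B a) - D' (algebraMap A B a) = 0 :=
    fun a => sub_eq_zero.mpr (h a)
  let δ : Derivation A B B :=
  { toLinearMap :=
    { toFun := fun b => D b - D' b
      map_add' := fun x y => by
        show D (x + y) - D' (x + y) = (D x - D' x) + (D y - D' y)
        rw [map_add, map_add]; ring
      map_smul' := fun a b => by
        show D (a • b) - D' (a • b) = a • (D b - D' b)
        rw [Algebra.smul_def, Derivation.leibniz, Derivation.leibniz,
          smul_eq_mul, smul_eq_mul, smul_eq_mul, smul_eq_mul, h a,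
          Algebra.smul_def]
        ring }
    map_one_eq_zero' := by
      show D 1 - D' 1 = 0
      rw [Derivation.map_one_eq_zero, Derivation.map_one_eq_zero, sub_zero]
    leibniz' := fun x y => by
      show D (x * y) - D' (x * y) = x • (D y - D' y) + y • (D x - D' x)
      rw [Derivation.leibniz, Derivation.leibniz]
      simp only [smul_eq_mul, smul_sub]
      ring }
  ext b
  have hb := key δ b
  have : D b - D' b = 0 := hb
  exact sub_eq_zero.mp this

end EtaleDerivationLift

/-- Let `σ : A → B` be an étale morphism of `K`-affinoid algebras over a
complete discretely valued field `K`.  Then there is a unique `A`-linear map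
`ψ : Der_K(A) → Der_K(B)` such that `ψ(u) ∘ σ = σ ∘ u` for each `u ∈ Der_K(A)`; moreover
`ψ` is a homomorphism of `K`-Lie algebras.

In this formalisation the affinoid algebras `A`, `B` are commutative `K`-algebras and
étaleness of `σ` (recorded by the `Algebra A B` instance) is expressed by
`Algebra.FormallyEtale A B`, which captures the defining property used in the proof: the
canonical map `B ⊗_A Ω_{A/K} → Ω_{B/K}` is an isomorphism, so that `K`-linear derivations
of `B` are uniquely determined by (and lift uniquely from) their restriction to `A`.
`A`-linearity of `ψ` means `ψ(a • u) = σ(a) • ψ(u)`. -/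
theorem etale_lift_of_derivations
    {K : Type*} [NontriviallyNormedField K] [CompleteSpace K]
    {A B : Type u} [CommRing A] [Algebra K A] [CommRing B] [Algebra K B]
    [Algebra A B] [IsScalarTower K A B] [Algebra.FormallyEtale A B] :
    (∃! ψ : Derivation K A A → Derivation K B B,
        (∀ u v : Derivation K A A, ψ (u + v) = ψ u + ψ v) ∧
        (∀ (a : A) (u : Derivation K A A), ψ (a • u) = algebraMap A B a • ψ u) ∧
        (∀ (u : Derivation K A A) (a : A),
          ψ u (algebraMap A B a) = algebraMap A B (u a))) ∧
      ∀ ψ : Derivation K A A → Derivation K B B,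
        ((∀ u v : Derivation K A A, ψ (u + v) = ψ u + ψ v) ∧
          (∀ (a : A) (u : Derivation K A A), ψ (a • u) = algebraMap A B a • ψ u) ∧
          (∀ (u : Derivation K A A) (a : A),
            ψ u (algebraMap A B a) = algebraMap A B (u a))) →
        ∀ u v : Derivation K A A, ψ ⁅u, v⁆ = ⁅ψ u, ψ v⁆ := by
  classical
  -- the canonical lift of each derivation
  let ψ₀ : Derivation K A A → Derivation K B B :=
    fun u => (derivation_lift_exists u).choose
  have hψ₀ : ∀ (u : Derivation K A A) (a : A),
      ψ₀ u (algebraMap A B a) = algebraMap A B (u a) :=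
    fun u => (derivation_lift_exists u).choose_spec
  -- any derivation agreeing with `σ ∘ u` on `A` equals `ψ₀ u`
  have huniq : ∀ (u : Derivation K A A) (D : Derivation K B B),
      (∀ a : A, D (algebraMap A B a) = algebraMap A B (u a)) → D = ψ₀ u := by
    intro u D hD
    exact derivation_lift_unique D (ψ₀ u) fun a => by rw [hD a, hψ₀ u a]
  have hcomm : ∀ (u : Derivation K A A) (a : A),
      ψ₀ u (algebraMap A B a) = algebraMap A B (u a) := hψ₀
  have hadd : ∀ u v : Derivation K A A, ψ₀ (u + v) = ψ₀ u + ψ₀ v := by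
    intro u v
    refine (huniq (u + v) (ψ₀ u + ψ₀ v) fun a => ?_).symm
    rw [Derivation.add_apply, hcomm, hcomm, Derivation.add_apply, map_add]
  have hsmul : ∀ (a : A) (u : Derivation K A A),
      ψ₀ (a • u) = algebraMap A B a • ψ₀ u := by
    intro a u
    refine (huniq (a • u) (algebraMap A B a • ψ₀ u) fun a' => ?_).symm
    rw [Derivation.smul_apply, hcomm, Derivation.smul_apply, smul_eq_mul,
      smul_eq_mul, ← map_mul]
  have hlie : ∀ (ψ : Derivation K A A → Derivation K B B),
      (∀ (u : Derivation K A A) (a : A),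
        ψ u (algebraMap A B a) = algebraMap A B (u a)) →
      ∀ u v : Derivation K A A, ψ ⁅u, v⁆ = ⁅ψ u, ψ v⁆ := by
    intro ψ hψ u v
    have h1 : ψ ⁅u, v⁆ = ψ₀ ⁅u, v⁆ := huniq _ _ (hψ _)
    have h2 : ⁅ψ u, ψ v⁆ = ψ₀ ⁅u, v⁆ := by
      refine huniq _ _ fun a => ?_
      rw [Derivation.commutator_apply, hψ v a, hψ u a, hψ u (v a), hψ v (u a),
        Derivation.commutator_apply, map_sub]
    rw [h1, h2]
  refine ⟨⟨ψ₀, ⟨hadd, hsmul, hcomm⟩, ?_⟩, fun ψ hψ => hlie ψ hψ.2.2⟩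
  intro ψ hψ
  funext w
  exact huniq w (ψ w) (hψ.2.2 w)
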